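/- Suppose that G_0^p and G_{n−1}^p are string C-groups, that the subspace V_{0,n−1} is nonsingular, and that G_{0,n−1}^p is the full orthogonal group O(V_{0,n−1}) on V_{0,n−1} (identified with a subgroup of O(V)). Then G^p is a string C-group. -/

import Mathlib

/- Setup: reduction mod an odd prime `p` of a crystallographic Coxeter group
`G = ⟨r₀, …, r_{n−1}⟩` with string diagram and Gram matrix `B`. -/

namespace Statement1

variable (n p : ℕ)

/-- `V = (ZMod p)^n`. -/
abbrev V := Fin n → ZMod p

/-- The general linear group of `V`. -/
abbrev GLV := (Module.End (ZMod p) (V n p))ˣ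

/-- Reduction of a rational number mod `p` (meaningful when the denominator is prime to `p`). -/
def redQ (q : ℚ) : ZMod p := (q.num : ZMod p) * ((q.den : ZMod p))⁻¹

/-- The standard basis vector `b_i`. -/
def basisVec (i : Fin n) : V n p := Pi.single i 1

/-- The symmetric bilinear form on `V` obtained by reducing the Gram matrix `B` mod `p`. -/
def form (B : Matrix (Fin n) (Fin n) ℚ) (x y : V n p) : ZMod p :=
  ∑ i, ∑ j, x i * redQ p (B i j) * y j

/-- `B` is the Gram matrix of a basic system for a crystallographic Coxeter group with
string diagram: symmetric, tridiagonal, positive integer node labels, integer Cartan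
entries, and branch condition `4 B_{i-1,i}² = c ⬝ B_{i-1,i-1} ⬝ B_{ii}` with `c ∈ {1,2,3,4}`
(or `B_{i-1,i} = 0`, i.e. an absent branch). -/
def GramOK (B : Matrix (Fin n) (Fin n) ℚ) : Prop :=
  (∀ i j, B i j = B j i) ∧
  (∀ i j : Fin n, 1 < |(i : ℤ) - (j : ℤ)| → B i j = 0) ∧
  (∀ i, ∃ m : ℕ, 0 < m ∧ B i i = m) ∧
  (∀ i j, ∃ c : ℤ, 2 * B i j / B i i = (c : ℚ)) ∧
  (∀ i : Fin n, ∀ h : (i : ℕ) + 1 < n,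
    B i ⟨(i : ℕ) + 1, h⟩ = 0 ∨
      ∃ c : ℕ, 1 ≤ c ∧ c ≤ 4 ∧
        4 * (B i ⟨(i : ℕ) + 1, h⟩) ^ 2 = c * B i i * B ⟨(i : ℕ) + 1, h⟩ ⟨(i : ℕ) + 1, h⟩)

/-- All entries of `B` are `p`-integral. -/
def PIntegral (B : Matrix (Fin n) (Fin n) ℚ) : Prop :=
  ∀ i j, ¬ (p ∣ (B i j).den)

/-- `p` is generic for `G`: either `p ≥ 5`, or `p = 3` and no branch is labelled `6`
(a branch `{i, i+1}` is labelled `6` exactly when `4 B_{i,i+1}² = 3 ⬝ B_{ii} ⬝ B_{i+1,i+1}`). -/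
def Generic (B : Matrix (Fin n) (Fin n) ℚ) : Prop :=
  5 ≤ p ∨ (p = 3 ∧ ∀ i : Fin n, ∀ h : (i : ℕ) + 1 < n,
    4 * (B i ⟨(i : ℕ) + 1, h⟩) ^ 2 ≠ 3 * B i i * B ⟨(i : ℕ) + 1, h⟩ ⟨(i : ℕ) + 1, h⟩)

/-- `r i` is the reduction mod `p` of the generating reflection `r_i`, determined by its
action on the standard basis: `r_i(b_j) = b_j − C_{ij} b_i` with `C_{ij} = 2 B_{ij}/B_{ii}`. -/
def ReflHyp (B : Matrix (Fin n) (Fin n) ℚ) (r : Fin n → GLV n p) : Prop :=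
  ∀ i j : Fin n, (r i).1 (basisVec n p j) =
    basisVec n p j - redQ p (2 * B i j / B i i) • basisVec n p i

/-- The intersection property (string C-group condition) for the subgroups generated by
the reflections `r i`, `i ∈ S`. -/
def IsStringC (r : Fin n → GLV n p) (S : Set (Fin n)) : Prop :=
  ∀ I J : Set (Fin n), I ⊆ S → J ⊆ S →
    Subgroup.closure (r '' I) ⊓ Subgroup.closure (r '' J) = Subgroup.closure (r '' (I ∩ J))

/-- The span of the basis vectors `b_i`, `i ∈ S`. -/
def spanV (S : Set (Fin n)) : Submodule (ZMod p) (V n p) :=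
  Submodule.span (ZMod p) (basisVec n p '' S)

/-- The subspace `W` is nonsingular: the restriction of the form to `W` is nondegenerate. -/
def Nonsing (B : Matrix (Fin n) (Fin n) ℚ) (W : Submodule (ZMod p) (V n p)) : Prop :=
  ∀ x ∈ W, (∀ y ∈ W, form n p B x y = 0) → x = 0

/-- The full orthogonal group `O(V)` of the form, as a subgroup of `GL(V)`. -/
def OV (B : Matrix (Fin n) (Fin n) ℚ) : Subgroup (GLV n p) where
  carrier := {g | ∀ x y, form n p B (g.1 x) (g.1 y) = form n p B x y}
  one_mem' := by intro x y; simp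
  mul_mem' := by
    intro a b ha hb x y
    simpa [Units.val_mul] using (ha (b.1 x) (b.1 y)).trans (hb x y)
  inv_mem' := by
    intro a ha x y
    have key : ∀ z, a.1 ((a⁻¹ : GLV n p).1 z) = z := by
      intro z
      rw [← Module.End.mul_apply, ← Units.val_mul, mul_inv_cancel, Units.val_one,
        Module.End.one_apply]
    have h := ha ((a⁻¹ : GLV n p).1 x) ((a⁻¹ : GLV n p).1 y)
    rw [key, key] at h
    exact h.symm

/-- `g` fixes `W^⊥` pointwise. -/
def perpFix (B : Matrix (Fin n) (Fin n) ℚ) (W : Submodule (ZMod p) (V n p))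
    (g : GLV n p) : Prop :=
  ∀ u : V n p, (∀ w ∈ W, form n p B u w = 0) → g.1 u = u

/-- `O(W)` identified with the subgroup `{g ∈ O(V) : g(W) = W, g fixes W^⊥ pointwise}`
of `O(V)`. -/
def OSub (B : Matrix (Fin n) (Fin n) ℚ) (W : Submodule (ZMod p) (V n p)) :
    Subgroup (GLV n p) where
  carrier := {g | g ∈ OV n p B ∧ Submodule.map g.1 W = W ∧ perpFix n p B W g}
  one_mem' := by
    refine ⟨(OV n p B).one_mem, ?_, fun u _ => by simp⟩
    simp [Module.End.one_eq_id]
  mul_mem' := by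
    rintro a b ⟨ha1, ha2, ha3⟩ ⟨hb1, hb2, hb3⟩
    refine ⟨mul_mem ha1 hb1, ?_, ?_⟩
    · rw [Units.val_mul, Module.End.mul_eq_comp, Submodule.map_comp, hb2, ha2]
    · intro u hu
      rw [Units.val_mul, Module.End.mul_apply, hb3 u hu, ha3 u hu]
  inv_mem' := by
    rintro a ⟨ha1, ha2, ha3⟩
    have key : ∀ z, (a⁻¹ : GLV n p).1 (a.1 z) = z := fun z => by
      rw [← Module.End.mul_apply, ← Units.val_mul, inv_mul_cancel, Units.val_one,
        Module.End.one_apply]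
    refine ⟨(OV n p B).inv_mem ha1, ?_, ?_⟩
    · conv_lhs => rw [← ha2]
      rw [← Submodule.map_comp, ← Module.End.mul_eq_comp, ← Units.val_mul, inv_mul_cancel,
        Units.val_one, Module.End.one_eq_id]
      simp
    · intro u hu
      conv_lhs => rw [← ha3 u hu]
      exact key u

/-- `g` is the reflection `r_a` with root `a ∈ W`, where `a·a` is a nonzero square. -/
def IsSqRefl (B : Matrix (Fin n) (Fin n) ℚ) (W : Submodule (ZMod p) (V n p))
    (g : GLV n p) : Prop :=
  ∃ a ∈ W, (∃ t : ZMod p, t ≠ 0 ∧ form n p B a a = t ^ 2) ∧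
    ∀ x, g.1 x = x - (2 * form n p B x a * (form n p B a a)⁻¹) • a

/-- `g` is the reflection `r_a` with root `a ∈ W`, where `a·a` is a nonsquare. -/
def IsNonsqRefl (B : Matrix (Fin n) (Fin n) ℚ) (W : Submodule (ZMod p) (V n p))
    (g : GLV n p) : Prop :=
  ∃ a ∈ W, (∀ t : ZMod p, form n p B a a ≠ t ^ 2) ∧
    ∀ x, g.1 x = x - (2 * form n p B x a * (form n p B a a)⁻¹) • a

/-- `O₁(W)` (resp. `Ô₁(W)` when `W` is singular): the subgroup generated by all
reflections `r_a` with root `a ∈ W` of square norm. -/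
def O1 (B : Matrix (Fin n) (Fin n) ℚ) (W : Submodule (ZMod p) (V n p)) :
    Subgroup (GLV n p) :=
  Subgroup.closure {g | IsSqRefl n p B W g}

/-- `O₂(W)`: the subgroup generated by all reflections `r_a` with root `a ∈ W`
of nonsquare norm. -/
def O2 (B : Matrix (Fin n) (Fin n) ℚ) (W : Submodule (ZMod p) (V n p)) :
    Subgroup (GLV n p) :=
  Subgroup.closure {g | IsNonsqRefl n p B W g}

/-- `H` is of orthogonal type on the (nonsingular) subspace `W`. -/
def OrthType (B : Matrix (Fin n) (Fin n) ℚ) (W : Submodule (ZMod p) (V n p))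
    (H : Subgroup (GLV n p)) : Prop :=
  H = OSub n p B W ∨ H = O1 n p B W ∨ H = O2 n p B W

section Aux

variable {n p : ℕ}

lemma redQ_intCast (p : ℕ) [Fact p.Prime] (m : ℤ) : redQ p (m : ℚ) = (m : ZMod p) := by
  simp [redQ]

lemma redQ_zero (p : ℕ) [Fact p.Prime] : redQ p 0 = 0 := by simp [redQ]

lemma den_ne_zero' (p : ℕ) [Fact p.Prime] {q : ℚ} (h : ¬ p ∣ q.den) :
    ((q.den : ZMod p)) ≠ 0 := by
  rw [Ne, ZMod.natCast_eq_zero_iff]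
  exact h

lemma redQ_mul (p : ℕ) [Fact p.Prime] {q r : ℚ} (hq : ¬ p ∣ q.den) (hr : ¬ p ∣ r.den) :
    redQ p (q * r) = redQ p q * redQ p r := by
  have hd : (q * r).den ∣ q.den * r.den := Rat.mul_den_dvd q r
  have hqr : ¬ p ∣ (q * r).den := fun h => by
    rcases (Nat.Prime.dvd_mul (Fact.out : p.Prime)).mp (h.trans hd) with h | h
    exacts [hq h, hr h]
  have key : ((q * r).num : ℤ) * q.den * r.den = q.num * r.num * (q * r).den := by
    have e : (((q * r).num : ℚ)) * q.den * r.den = q.num * r.num * (q * r).den := by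
      have h1 : ((q*r).num : ℚ) = (q*r) * (q*r).den := by
        exact (Rat.mul_den_eq_num _).symm
      have h2 : (q.num : ℚ) = q * q.den := by exact (Rat.mul_den_eq_num _).symm
      have h3 : (r.num : ℚ) = r * r.den := by exact (Rat.mul_den_eq_num _).symm
      rw [h1, h2, h3]; ring
    exact_mod_cast e
  have keyp : ((q * r).num : ZMod p) * (q.den : ℕ) * (r.den : ℕ) =
      (q.num : ZMod p) * (r.num : ZMod p) * ((q * r).den : ℕ) := by
    have := congrArg (fun z : ℤ => (z : ZMod p)) key
    push_cast at this ⊢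
    exact this
  have h1 := den_ne_zero' p hq
  have h2 := den_ne_zero' p hr
  have h3 := den_ne_zero' p hqr
  unfold redQ
  field_simp
  linear_combination keyp

end Aux
section Aux2

variable {n p : ℕ}

lemma basis_expand (x : V n p) : ∑ m, x m • basisVec n p m = x := by
  have : ∀ m : Fin n, x m • basisVec n p m = Pi.single m (x m) := by
    intro m
    rw [basisVec, ← Pi.single_smul, smul_eq_mul, mul_one]
  simp_rw [this]
  exact Finset.univ_sum_single x

lemma form_add_left (B : Matrix (Fin n) (Fin n) ℚ) (x x' y : V n p) :
    form n p B (x + x') y = form n p B x y + form n p B x' y := by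
  simp [form, add_mul, Finset.sum_add_distrib]

lemma form_sub_left (B : Matrix (Fin n) (Fin n) ℚ) (x x' y : V n p) :
    form n p B (x - x') y = form n p B x y - form n p B x' y := by
  simp [form, sub_mul, Finset.sum_sub_distrib]

lemma form_sub_right (B : Matrix (Fin n) (Fin n) ℚ) (x y y' : V n p) :
    form n p B x (y - y') = form n p B x y - form n p B x y' := by
  simp [form, mul_sub, Finset.sum_sub_distrib]

lemma form_smul_left (B : Matrix (Fin n) (Fin n) ℚ) (c : ZMod p) (x y : V n p) :
    form n p B (c • x) y = c * form n p B x y := by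
  simp only [form, Finset.mul_sum, Pi.smul_apply, smul_eq_mul]
  exact Finset.sum_congr rfl fun i _ => Finset.sum_congr rfl fun j _ => by ring

lemma form_smul_right (B : Matrix (Fin n) (Fin n) ℚ) (c : ZMod p) (x y : V n p) :
    form n p B x (c • y) = c * form n p B x y := by
  simp only [form, Finset.mul_sum, Pi.smul_apply, smul_eq_mul]
  exact Finset.sum_congr rfl fun i _ => Finset.sum_congr rfl fun j _ => by ring

lemma form_basis_right (B : Matrix (Fin n) (Fin n) ℚ) (x : V n p) (i : Fin n) :
    form n p B x (basisVec n p i) = ∑ a, x a * redQ p (B a i) := by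
  unfold form basisVec
  refine Finset.sum_congr rfl fun a _ => ?_
  rw [Finset.sum_eq_single i]
  · simp
  · intro b _ hb; simp [Pi.single_apply, hb]
  · simp

lemma form_basis_left (B : Matrix (Fin n) (Fin n) ℚ) (y : V n p) (i : Fin n) :
    form n p B (basisVec n p i) y = ∑ b, redQ p (B i b) * y b := by
  unfold form basisVec
  rw [Finset.sum_eq_single i]
  · refine Finset.sum_congr rfl fun b _ => by simp
  · intro a _ ha
    refine Finset.sum_eq_zero fun b _ => by simp [Pi.single_apply, ha]
  · simp

lemma form_basis_basis (B : Matrix (Fin n) (Fin n) ℚ) (i j : Fin n) :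
    form n p B (basisVec n p i) (basisVec n p j) = redQ p (B i j) := by
  rw [form_basis_left]
  rw [Finset.sum_eq_single j]
  · simp [basisVec]
  · intro b _ hb; simp [basisVec, Pi.single_apply, hb]
  · simp

/-- Membership in a coordinate span. -/
lemma mem_spanV (S : Set (Fin n)) (x : V n p) :
    x ∈ spanV n p S ↔ ∀ i, i ∉ S → x i = 0 := by
  constructor
  · intro hx
    have : spanV n p S ≤
        { carrier := {x : V n p | ∀ i, i ∉ S → x i = 0}
          add_mem' := fun ha hb i hi => by
            simp only [Set.mem_setOf_eq] at *
            simp [Pi.add_apply, ha i hi, hb i hi]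
          zero_mem' := fun i _ => rfl
          smul_mem' := fun c x hx i hi => by
            simp only [Set.mem_setOf_eq] at *
            simp [Pi.smul_apply, hx i hi] } := by
      rw [spanV, Submodule.span_le]
      rintro _ ⟨j, hj, rfl⟩ i hi
      have : i ≠ j := fun h => hi (h ▸ hj)
      simp [basisVec, Pi.single_apply, this]
    exact this hx
  · intro h
    rw [← basis_expand x]
    refine Submodule.sum_mem _ fun i _ => ?_
    by_cases hi : i ∈ S
    · exact Submodule.smul_mem _ _ (Submodule.subset_span ⟨i, hi, rfl⟩)
    · rw [h i hi, zero_smul]; exact Submodule.zero_mem _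

end Aux2
section Aux3

variable {n p : ℕ}

/-- Full action of `r i` on any vector. -/
lemma refl_apply {B : Matrix (Fin n) (Fin n) ℚ} {r : Fin n → GLV n p}
    (hr : ReflHyp n p B r) (i : Fin n) (x : V n p) :
    (r i).1 x = x - (∑ m, x m * redQ p (2 * B i m / B i i)) • basisVec n p i := by
  conv_lhs => rw [← basis_expand x, map_sum]
  simp_rw [map_smul, hr i, smul_sub, Finset.sum_sub_distrib, basis_expand, smul_smul,
    ← Finset.sum_smul]

/-- Linear endomorphisms agreeing on the basis are equal. -/
lemma end_ext {f g : Module.End (ZMod p) (V n p)}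
    (h : ∀ m, f (basisVec n p m) = g (basisVec n p m)) : f = g := by
  refine LinearMap.ext fun x => ?_
  rw [← basis_expand x, map_sum, map_sum]
  simp_rw [map_smul, h]

lemma kappa_zero {B : Matrix (Fin n) (Fin n) ℚ} (hB : GramOK n B) [Fact p.Prime]
    {i j : Fin n} (h : 1 < |(i : ℤ) - (j : ℤ)|) :
    redQ p (2 * B i j / B i i) = 0 := by
  rw [hB.2.1 i j h]
  norm_num [redQ_zero]

/-- distant reflections commute -/
lemma refl_commute {B : Matrix (Fin n) (Fin n) ℚ} {r : Fin n → GLV n p} [Fact p.Prime]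
    (hB : GramOK n B) (hr : ReflHyp n p B r) {i j : Fin n}
    (h : 1 < |(i : ℤ) - (j : ℤ)|) : r i * r j = r j * r i := by
  have h' : 1 < |(j : ℤ) - (i : ℤ)| := by rwa [abs_sub_comm]
  have hij := kappa_zero (p := p) hB h
  have hji := kappa_zero (p := p) hB h'
  apply Units.ext
  apply end_ext
  intro m
  simp only [Units.val_mul, Module.End.mul_apply, hr i, hr j, map_sub, map_smul,
    hr i m, hr j m, hij, hji, zero_smul, sub_zero]
  abel

/-- `2 B i a = c_{ia} B i i` reduced mod p. -/
lemma two_entry {B : Matrix (Fin n) (Fin n) ℚ} [Fact p.Prime]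
    (hB : GramOK n B) (hint : PIntegral n p B) (i a : Fin n) :
    (2 : ZMod p) * redQ p (B i a) = redQ p (2 * B i a / B i i) * redQ p (B i i) := by
  obtain ⟨c, hc⟩ := hB.2.2.2.1 i a
  obtain ⟨m, hm, hmeq⟩ := hB.2.2.1 i
  have hBii : B i i ≠ 0 := by rw [hmeq]; exact_mod_cast hm.ne'
  have hq : 2 * B i a = (c : ℚ) * B i i := by
    field_simp at hc
    linarith [hc]
  have h2 : redQ p (2 * B i a) = redQ p ((c : ℚ) * B i i) := by rw [hq]
  have e1 : redQ p (((2 : ℤ) : ℚ) * B i a) = ((2 : ℤ) : ZMod p) * redQ p (B i a) := by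
    rw [redQ_mul p (by simp; exact (Fact.out : p.Prime).ne_one) (hint i a), redQ_intCast]
  have e2 : redQ p ((c : ℚ) * B i i) = (c : ZMod p) * redQ p (B i i) := by
    rw [redQ_mul p (by simp; exact (Fact.out : p.Prime).ne_one) (hint i i), redQ_intCast]
  rw [hc]
  push_cast at e1
  rw [e1.symm.trans (h2.trans e2), redQ_intCast]

lemma four_ne_zero (p : ℕ) [Fact p.Prime] (hodd : p ≠ 2) : ((4 : ZMod p)) ≠ 0 := by
  have h2 : ((2 : ℕ) : ZMod p) ≠ 0 := by
    rw [Ne, ZMod.natCast_eq_zero_iff]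
    intro h
    exact hodd ((Nat.prime_dvd_prime_iff_eq Fact.out Nat.prime_two).mp h)
  have : ((4 : ZMod p)) = ((2 : ℕ) : ZMod p) * ((2 : ℕ) : ZMod p) := by norm_num
  rw [this]
  exact mul_ne_zero h2 h2

/-- The key scalar identity behind the isometry property. -/
lemma key_scalar {B : Matrix (Fin n) (Fin n) ℚ} [Fact p.Prime]
    (hB : GramOK n B) (hint : PIntegral n p B) (hodd : p ≠ 2) (i a b : Fin n) :
    redQ p (2 * B i b / B i i) * redQ p (B a i) + redQ p (2 * B i a / B i i) * redQ p (B i b)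
      = redQ p (2 * B i a / B i i) * redQ p (2 * B i b / B i i) * redQ p (B i i) := by
  have h1 := two_entry (p := p) hB hint i a
  have h2 := two_entry (p := p) hB hint i b
  have hsym : redQ p (B a i) = redQ p (B i a) := by rw [hB.1 a i]
  apply mul_left_cancel₀ (four_ne_zero p hodd)
  rw [hsym]
  linear_combination (2 * redQ p (2 * B i b / B i i)) * h1 +
    (2 * redQ p (2 * B i a / B i i)) * h2

end Aux3
section Aux4

variable {n p : ℕ}

lemma unit_apply_inv_apply (g : GLV n p) (x : V n p) : g.1 ((g⁻¹ : GLV n p).1 x) = x := by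
  rw [← Module.End.mul_apply, ← Units.val_mul, mul_inv_cancel, Units.val_one,
    Module.End.one_apply]

lemma refl_isometry {B : Matrix (Fin n) (Fin n) ℚ} {r : Fin n → GLV n p} [Fact p.Prime]
    (hB : GramOK n B) (hint : PIntegral n p B) (hodd : p ≠ 2) (hr : ReflHyp n p B r)
    (i : Fin n) : r i ∈ OV n p B := by
  have main : ∀ x y, form n p B ((r i).1 x) ((r i).1 y) = form n p B x y := by
    intro x y
    have key : (∑ b, y b * redQ p (2 * B i b / B i i)) * (∑ a, x a * redQ p (B a i)) +
        (∑ a, x a * redQ p (2 * B i a / B i i)) * (∑ b, redQ p (B i b) * y b) =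
        (∑ a, x a * redQ p (2 * B i a / B i i)) * (∑ b, y b * redQ p (2 * B i b / B i i)) * redQ p (B i i) := by
      have L1 : (∑ b, y b * redQ p (2 * B i b / B i i)) * (∑ a, x a * redQ p (B a i)) =
          ∑ a, ∑ b, (y b * redQ p (2 * B i b / B i i)) * (x a * redQ p (B a i)) := by
        rw [Finset.sum_mul_sum, Finset.sum_comm]
      have L2 : (∑ a, x a * redQ p (2 * B i a / B i i)) * (∑ b, redQ p (B i b) * y b) =
          ∑ a, ∑ b, (x a * redQ p (2 * B i a / B i i)) * (redQ p (B i b) * y b) := Finset.sum_mul_sum _ _ _ _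
      have R : (∑ a, x a * redQ p (2 * B i a / B i i)) * (∑ b, y b * redQ p (2 * B i b / B i i)) * redQ p (B i i) =
          ∑ a, ∑ b, (x a * redQ p (2 * B i a / B i i)) * (y b * redQ p (2 * B i b / B i i)) * redQ p (B i i) := by
        rw [Finset.sum_mul_sum, Finset.sum_mul]
        exact Finset.sum_congr rfl fun a _ => by rw [Finset.sum_mul]
      rw [L1, L2, R, ← Finset.sum_add_distrib]
      refine Finset.sum_congr rfl fun a _ => ?_
      rw [← Finset.sum_add_distrib]
      refine Finset.sum_congr rfl fun b _ => ?_
      have hk := key_scalar (p := p) hB hint hodd i a b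
      linear_combination (x a * y b) * hk
    rw [refl_apply hr, refl_apply hr]
    simp only [form_sub_left, form_sub_right]
    simp only [form_smul_left, form_smul_right]
    simp only [form_basis_basis]
    simp only [form_basis_right, form_basis_left]
    linear_combination -key
  exact main

lemma closure_le_OV {B : Matrix (Fin n) (Fin n) ℚ} {r : Fin n → GLV n p} [Fact p.Prime]
    (hB : GramOK n B) (hint : PIntegral n p B) (hodd : p ≠ 2) (hr : ReflHyp n p B r)
    (S : Set (Fin n)) : Subgroup.closure (r '' S) ≤ OV n p B := by
  rw [Subgroup.closure_le]
  rintro _ ⟨j, _, rfl⟩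
  exact refl_isometry hB hint hodd hr j

lemma diff_mem {B : Matrix (Fin n) (Fin n) ℚ} {r : Fin n → GLV n p}
    (hr : ReflHyp n p B r) {S : Set (Fin n)} {g : GLV n p}
    (hg : g ∈ Subgroup.closure (r '' S)) (x : V n p) : g.1 x - x ∈ spanV n p S := by
  revert x
  refine Subgroup.closure_induction ?_ ?_ ?_ ?_ hg
  · rintro _ ⟨j, hj, rfl⟩ x
    rw [refl_apply hr, sub_sub_cancel_left]
    exact neg_mem (Submodule.smul_mem _ _ (Submodule.subset_span ⟨j, hj, rfl⟩))
  · intro x; simp only [Units.val_one, Module.End.one_apply, sub_self]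
    exact Submodule.zero_mem _
  · intro a b _ _ ha hb x
    have : (a * b).1 x - x = (a.1 (b.1 x) - b.1 x) + (b.1 x - x) := by
      rw [Units.val_mul, Module.End.mul_apply]; abel
    rw [this]; exact add_mem (ha _) (hb _)
  · intro a _ ha x
    have hx : a.1 ((a⁻¹ : GLV n p).1 x) = x := unit_apply_inv_apply a x
    have : (a⁻¹ : GLV n p).1 x - x = -(a.1 ((a⁻¹ : GLV n p).1 x) - (a⁻¹ : GLV n p).1 x) := by
      rw [hx]; abel
    rw [this]; exact neg_mem (ha _)

lemma commute_closure {G : Type*} [Group G] {s t : Set G}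
    (h : ∀ a ∈ s, ∀ b ∈ t, a * b = b * a) :
    ∀ a ∈ Subgroup.closure s, ∀ b ∈ Subgroup.closure t, a * b = b * a := by
  intro a ha b hb
  have h1 : Subgroup.closure s ≤ Subgroup.centralizer t := by
    rw [Subgroup.closure_le]
    intro a' ha'
    rw [SetLike.mem_coe, Subgroup.mem_centralizer_iff]
    intro g hg
    exact (h a' ha' g hg).symm
  have h1a := h1 ha
  rw [Subgroup.mem_centralizer_iff] at h1a
  have h2 : Subgroup.closure t ≤ Subgroup.centralizer {a} := by
    rw [Subgroup.closure_le]
    intro b' hb'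
    rw [SetLike.mem_coe, Subgroup.mem_centralizer_iff]
    intro g hg
    rw [Set.mem_singleton_iff] at hg
    subst hg
    exact (h1a b' hb').symm
  have h2b := h2 hb
  rw [Subgroup.mem_centralizer_iff] at h2b
  exact h2b a (Set.mem_singleton a)

lemma decomp {G : Type*} [Group G] {s t : Set G}
    (h : ∀ a ∈ s, ∀ b ∈ t, a * b = b * a) {g : G} (hg : g ∈ Subgroup.closure (s ∪ t)) :
    ∃ a ∈ Subgroup.closure s, ∃ b ∈ Subgroup.closure t, g = a * b := by
  refine Subgroup.closure_induction ?_ ?_ ?_ ?_ hg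
  · rintro x (hx | hx)
    · exact ⟨x, Subgroup.subset_closure hx, 1, one_mem _, (mul_one x).symm⟩
    · exact ⟨1, one_mem _, x, Subgroup.subset_closure hx, (one_mul x).symm⟩
  · exact ⟨1, one_mem _, 1, one_mem _, (one_mul 1).symm⟩
  · rintro x y _ _ ⟨a1, ha1, b1, hb1, rfl⟩ ⟨a2, ha2, b2, hb2, rfl⟩
    refine ⟨a1 * a2, mul_mem ha1 ha2, b1 * b2, mul_mem hb1 hb2, ?_⟩
    have hc := commute_closure h a2 ha2 b1 hb1
    have e : a1 * b1 * (a2 * b2) = a1 * (b1 * a2) * b2 := by group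
    rw [e, ← hc]
    group
  · rintro x _ ⟨a, ha, b, hb, rfl⟩
    refine ⟨a⁻¹, inv_mem ha, b⁻¹, inv_mem hb, ?_⟩
    have hc : Commute a b := commute_closure h a ha b hb
    rw [mul_inv_rev, hc.inv_inv.eq]

end Aux4
section Aux5

variable {n p : ℕ}

lemma mem_mid {x : V n p}
    (h0 : x ∈ spanV n p {i : Fin n | (i : ℕ) ≠ 0})
    (h1 : x ∈ spanV n p {i : Fin n | (i : ℕ) ≠ n - 1}) :
    x ∈ spanV n p {i : Fin n | (i : ℕ) ≠ 0 ∧ (i : ℕ) ≠ n - 1} := by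
  rw [mem_spanV] at h0 h1 ⊢
  intro i hi
  simp only [Set.mem_setOf_eq, not_and_or, not_not] at hi
  rcases hi with h | h
  · exact h0 i (not_not_intro h)
  · exact h1 i (not_not_intro h)

/-- The key geometric fact: `G₀ ∩ G_{n-1} = G_{0,n-1}`. -/
lemma inter_eq_mid {B : Matrix (Fin n) (Fin n) ℚ} {r : Fin n → GLV n p} [Fact p.Prime]
    (hodd : p ≠ 2) (hB : GramOK n B) (hint : PIntegral n p B) (hr : ReflHyp n p B r)
    (hns : Nonsing n p B (spanV n p {i : Fin n | (i : ℕ) ≠ 0 ∧ (i : ℕ) ≠ n - 1}))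
    (hfull : Subgroup.closure (r '' {i : Fin n | (i : ℕ) ≠ 0 ∧ (i : ℕ) ≠ n - 1}) =
      OSub n p B (spanV n p {i : Fin n | (i : ℕ) ≠ 0 ∧ (i : ℕ) ≠ n - 1})) :
    Subgroup.closure (r '' {i : Fin n | (i : ℕ) ≠ 0}) ⊓
      Subgroup.closure (r '' {i : Fin n | (i : ℕ) ≠ n - 1}) =
    Subgroup.closure (r '' {i : Fin n | (i : ℕ) ≠ 0 ∧ (i : ℕ) ≠ n - 1}) := by
  set W := spanV n p {i : Fin n | (i : ℕ) ≠ 0 ∧ (i : ℕ) ≠ n - 1} with hW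
  apply le_antisymm
  · intro g hg
    obtain ⟨hg0, hgn⟩ : g ∈ Subgroup.closure (r '' {i : Fin n | (i : ℕ) ≠ 0}) ∧
        g ∈ Subgroup.closure (r '' {i : Fin n | (i : ℕ) ≠ n - 1}) := hg
    have hWmem : ∀ h : GLV n p, h ∈ Subgroup.closure (r '' {i : Fin n | (i : ℕ) ≠ 0}) →
        h ∈ Subgroup.closure (r '' {i : Fin n | (i : ℕ) ≠ n - 1}) →
        ∀ w ∈ W, h.1 w ∈ W := by
      intro h h0' hn' w hw
      have hd : h.1 w - w ∈ W := mem_mid (diff_mem hr h0' w) (diff_mem hr hn' w)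
      have := Submodule.add_mem W hw hd
      simpa using this
    have hiso : g ∈ OV n p B :=
      closure_le_OV hB hint hodd hr {i : Fin n | (i : ℕ) ≠ 0} hg0
    rw [hfull]
    refine ⟨hiso, ?_, ?_⟩
    · apply le_antisymm
      · rintro _ ⟨w, hw, rfl⟩
        exact hWmem g hg0 hgn w hw
      · intro w hw
        exact ⟨(g⁻¹ : GLV n p).1 w,
          hWmem g⁻¹ (inv_mem hg0) (inv_mem hgn) w hw, unit_apply_inv_apply g w⟩
    · intro u hu
      have hd : g.1 u - u ∈ W := mem_mid (diff_mem hr hg0 u) (diff_mem hr hgn u)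
      have hzero : ∀ w ∈ W, form n p B (g.1 u - u) w = 0 := by
        intro w hw
        have hw' : (g⁻¹ : GLV n p).1 w ∈ W :=
          hWmem g⁻¹ (inv_mem hg0) (inv_mem hgn) w hw
        have he : form n p B (g.1 u) w = form n p B u ((g⁻¹ : GLV n p).1 w) := by
          conv_lhs => rw [← unit_apply_inv_apply g w]
          exact hiso u ((g⁻¹ : GLV n p).1 w)
        rw [form_sub_left, he, hu _ hw', hu w hw, sub_zero]
      have := hns _ hd hzero
      exact sub_eq_zero.mp this
  · exact le_inf
      (Subgroup.closure_mono (Set.image_mono fun i hi => hi.1))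
      (Subgroup.closure_mono (Set.image_mono fun i hi => hi.2))

lemma comm_images {B : Matrix (Fin n) (Fin n) ℚ} {r : Fin n → GLV n p} [Fact p.Prime]
    (hB : GramOK n B) (hr : ReflHyp n p B r) {I1 I2 : Set (Fin n)}
    (h : ∀ i ∈ I1, ∀ j ∈ I2, (i : ℕ) + 1 < (j : ℕ)) :
    ∀ a ∈ r '' I1, ∀ b ∈ r '' I2, a * b = b * a := by
  rintro _ ⟨i, hi, rfl⟩ _ ⟨j, hj, rfl⟩
  apply refl_commute hB hr
  have hij := h i hi j hj
  have h1 : (1 : ℤ) < (j : ℤ) - (i : ℤ) := by omega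
  calc (1 : ℤ) < (j : ℤ) - (i : ℤ) := h1
    _ ≤ |(j : ℤ) - (i : ℤ)| := le_abs_self _
    _ = |(i : ℤ) - (j : ℤ)| := abs_sub_comm _ _

end Aux5
/-- if `G₀ᵖ`, `G_{n-1}ᵖ` are string C-groups, `V_{0,n-1}` is nonsingular
and `G_{0,n-1}ᵖ` is the full orthogonal group on `V_{0,n-1}`, then `Gᵖ` is a
string C-group. -/
theorem statement1
    (n p : ℕ) (hn : 3 ≤ n) (hp : p.Prime) (hodd : p ≠ 2)
    (B : Matrix (Fin n) (Fin n) ℚ)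
    (hB : GramOK n B) (hint : PIntegral n p B)
    (r : Fin n → GLV n p) (hr : ReflHyp n p B r)
    (h0 : IsStringC n p r {i : Fin n | (i : ℕ) ≠ 0})
    (hn1 : IsStringC n p r {i : Fin n | (i : ℕ) ≠ n - 1})
    (hns : Nonsing n p B (spanV n p {i : Fin n | (i : ℕ) ≠ 0 ∧ (i : ℕ) ≠ n - 1}))
    (hfull : Subgroup.closure (r '' {i : Fin n | (i : ℕ) ≠ 0 ∧ (i : ℕ) ≠ n - 1}) = OSub n p B (spanV n p {i : Fin n | (i : ℕ) ≠ 0 ∧ (i : ℕ) ≠ n - 1})) :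
    IsStringC n p r Set.univ := by
  haveI : Fact p.Prime := ⟨hp⟩
  set S0 : Set (Fin n) := {i : Fin n | (i : ℕ) ≠ 0} with hS0def
  set Sn : Set (Fin n) := {i : Fin n | (i : ℕ) ≠ n - 1} with hSndef
  have mono : ∀ {I J : Set (Fin n)}, I ⊆ J →
      Subgroup.closure (r '' I) ≤ Subgroup.closure (r '' J) :=
    fun h => Subgroup.closure_mono (Set.image_mono h)
  have lower : ∀ I J : Set (Fin n),
      Subgroup.closure (r '' (I ∩ J)) ≤
        Subgroup.closure (r '' I) ⊓ Subgroup.closure (r '' J) :=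
    fun I J => le_inf (mono Set.inter_subset_left) (mono Set.inter_subset_right)
  have h01 : Subgroup.closure (r '' S0) ⊓ Subgroup.closure (r '' Sn) =
      Subgroup.closure (r '' (S0 ∩ Sn)) := by
    have hmid : S0 ∩ Sn = {i : Fin n | (i : ℕ) ≠ 0 ∧ (i : ℕ) ≠ n - 1} := rfl
    rw [hmid]
    exact inter_eq_mid hodd hB hint hr hns hfull
  -- one-sided intersections with the two maximal standard subgroups
  have claimL : ∀ I : Set (Fin n), I ⊆ Sn →
      Subgroup.closure (r '' I) ⊓ Subgroup.closure (r '' S0) =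
      Subgroup.closure (r '' (I ∩ S0)) := by
    intro I hI
    have e1 : Subgroup.closure (r '' I) ⊓ Subgroup.closure (r '' Sn) =
        Subgroup.closure (r '' I) := inf_eq_left.mpr (mono hI)
    have e3 : I ∩ (S0 ∩ Sn) = I ∩ S0 := by
      ext i
      exact ⟨fun ⟨h1, h2, _⟩ => ⟨h1, h2⟩, fun ⟨h1, h2⟩ => ⟨h1, h2, hI h1⟩⟩
    calc Subgroup.closure (r '' I) ⊓ Subgroup.closure (r '' S0)
        = Subgroup.closure (r '' I) ⊓ Subgroup.closure (r '' Sn) ⊓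
            Subgroup.closure (r '' S0) := by rw [e1]
      _ = Subgroup.closure (r '' I) ⊓
            (Subgroup.closure (r '' S0) ⊓ Subgroup.closure (r '' Sn)) := by
          rw [inf_assoc,
            inf_comm (Subgroup.closure (r '' Sn)) (Subgroup.closure (r '' S0))]
      _ = Subgroup.closure (r '' I) ⊓ Subgroup.closure (r '' (S0 ∩ Sn)) := by rw [h01]
      _ = Subgroup.closure (r '' (I ∩ (S0 ∩ Sn))) :=
          hn1 I (S0 ∩ Sn) hI Set.inter_subset_right
      _ = _ := by rw [e3]
  have claimL' : ∀ I : Set (Fin n), I ⊆ S0 →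
      Subgroup.closure (r '' I) ⊓ Subgroup.closure (r '' Sn) =
      Subgroup.closure (r '' (I ∩ Sn)) := by
    intro I hI
    have e1 : Subgroup.closure (r '' I) ⊓ Subgroup.closure (r '' S0) =
        Subgroup.closure (r '' I) := inf_eq_left.mpr (mono hI)
    have e3 : I ∩ (S0 ∩ Sn) = I ∩ Sn := by
      ext i
      exact ⟨fun ⟨h1, _, h3⟩ => ⟨h1, h3⟩, fun ⟨h1, h2⟩ => ⟨h1, hI h1, h2⟩⟩
    calc Subgroup.closure (r '' I) ⊓ Subgroup.closure (r '' Sn)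
        = Subgroup.closure (r '' I) ⊓ Subgroup.closure (r '' S0) ⊓
            Subgroup.closure (r '' Sn) := by rw [e1]
      _ = Subgroup.closure (r '' I) ⊓
            (Subgroup.closure (r '' S0) ⊓ Subgroup.closure (r '' Sn)) := by
          rw [inf_assoc]
      _ = Subgroup.closure (r '' I) ⊓ Subgroup.closure (r '' (S0 ∩ Sn)) := by rw [h01]
      _ = Subgroup.closure (r '' (I ∩ (S0 ∩ Sn))) :=
          h0 I (S0 ∩ Sn) hI Set.inter_subset_left
      _ = _ := by rw [e3]
  -- splitting at a missing middle node
  have split : ∀ (I : Set (Fin n)) (k : Fin n), k ∉ I →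
      ∀ g ∈ Subgroup.closure (r '' I),
      ∃ g1 ∈ Subgroup.closure (r '' {i ∈ I | (i : ℕ) < (k : ℕ)}),
      ∃ g2 ∈ Subgroup.closure (r '' {i ∈ I | (k : ℕ) < (i : ℕ)}), g = g1 * g2 := by
    intro I k hk g hg
    have hIeq : I = {i ∈ I | (i : ℕ) < (k : ℕ)} ∪ {i ∈ I | (k : ℕ) < (i : ℕ)} := by
      ext i
      constructor
      · intro hi
        rcases Nat.lt_trichotomy (i : ℕ) (k : ℕ) with h | h | h
        · exact Or.inl ⟨hi, h⟩
        · have : i = k := Fin.val_injective h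
          exact absurd (this ▸ hi) hk
        · exact Or.inr ⟨hi, h⟩
      · rintro (⟨hi, _⟩ | ⟨hi, _⟩) <;> exact hi
    rw [hIeq, Set.image_union] at hg
    exact decomp (comm_images hB hr fun i hi j hj => by
      have h1 := hi.2; have h2 := hj.2; omega) hg
  -- arbitrary ⊓ maximal
  have claimA : ∀ I : Set (Fin n),
      Subgroup.closure (r '' I) ⊓ Subgroup.closure (r '' S0) =
      Subgroup.closure (r '' (I ∩ S0)) := by
    intro I
    by_cases hI0 : I ⊆ S0
    · rw [Set.inter_eq_left.mpr hI0]
      exact inf_eq_left.mpr (mono hI0)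
    by_cases hIn : I ⊆ Sn
    · exact claimL I hIn
    by_cases hIu : I = Set.univ
    · subst hIu
      rw [Set.univ_inter]
      exact inf_eq_right.mpr (mono (Set.subset_univ _))
    obtain ⟨i0, hi0I, hi0⟩ := Set.not_subset.mp hI0
    obtain ⟨i1, hi1I, hi1⟩ := Set.not_subset.mp hIn
    have hi0v : (i0 : ℕ) = 0 := not_not.mp hi0
    have hi1v : (i1 : ℕ) = n - 1 := not_not.mp hi1
    obtain ⟨k, hk⟩ : ∃ k : Fin n, k ∉ I := by
      by_contra h
      push_neg at h
      exact hIu (Set.eq_univ_of_forall h)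
    have hk0 : (k : ℕ) ≠ 0 := fun h =>
      hk (Fin.val_injective (h.trans hi0v.symm) ▸ hi0I)
    have hkn : (k : ℕ) ≠ n - 1 := fun h =>
      hk (Fin.val_injective (h.trans hi1v.symm) ▸ hi1I)
    apply le_antisymm _ (lower I S0)
    intro g hg
    obtain ⟨hgI, hgS0⟩ := Subgroup.mem_inf.mp hg
    obtain ⟨g1, hg1, g2, hg2, rfl⟩ := split I k hk g hgI
    have hI2S0 : {i ∈ I | (k : ℕ) < (i : ℕ)} ⊆ S0 := fun i hi => by
      have h2 := hi.2
      simp only [hS0def, Set.mem_setOf_eq]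
      omega
    have hI1Sn : {i ∈ I | (i : ℕ) < (k : ℕ)} ⊆ Sn := fun i hi => by
      have h2 := hi.2
      have h3 := k.isLt
      simp only [hSndef, Set.mem_setOf_eq]
      omega
    have hg2S0 : g2 ∈ Subgroup.closure (r '' S0) := mono hI2S0 hg2
    have hg1S0 : g1 ∈ Subgroup.closure (r '' S0) := by
      have e : g1 = g1 * g2 * g2⁻¹ := by group
      rw [e]
      exact mul_mem hgS0 (inv_mem hg2S0)
    have hg1' : g1 ∈ Subgroup.closure (r '' ({i ∈ I | (i : ℕ) < (k : ℕ)} ∩ S0)) := by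
      rw [← claimL _ hI1Sn]
      exact Subgroup.mem_inf.mpr ⟨hg1, hg1S0⟩
    have sub1 : {i ∈ I | (i : ℕ) < (k : ℕ)} ∩ S0 ⊆ I ∩ S0 := fun i hi => ⟨hi.1.1, hi.2⟩
    have sub2 : {i ∈ I | (k : ℕ) < (i : ℕ)} ⊆ I ∩ S0 := fun i hi => ⟨hi.1, hI2S0 hi⟩
    exact mul_mem (mono sub1 hg1') (mono sub2 hg2)
  have claimA' : ∀ I : Set (Fin n),
      Subgroup.closure (r '' I) ⊓ Subgroup.closure (r '' Sn) =
      Subgroup.closure (r '' (I ∩ Sn)) := by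
    intro I
    by_cases hIn : I ⊆ Sn
    · rw [Set.inter_eq_left.mpr hIn]
      exact inf_eq_left.mpr (mono hIn)
    by_cases hI0 : I ⊆ S0
    · exact claimL' I hI0
    by_cases hIu : I = Set.univ
    · subst hIu
      rw [Set.univ_inter]
      exact inf_eq_right.mpr (mono (Set.subset_univ _))
    obtain ⟨i0, hi0I, hi0⟩ := Set.not_subset.mp hI0
    obtain ⟨i1, hi1I, hi1⟩ := Set.not_subset.mp hIn
    have hi0v : (i0 : ℕ) = 0 := not_not.mp hi0
    have hi1v : (i1 : ℕ) = n - 1 := not_not.mp hi1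
    obtain ⟨k, hk⟩ : ∃ k : Fin n, k ∉ I := by
      by_contra h
      push_neg at h
      exact hIu (Set.eq_univ_of_forall h)
    have hk0 : (k : ℕ) ≠ 0 := fun h =>
      hk (Fin.val_injective (h.trans hi0v.symm) ▸ hi0I)
    have hkn : (k : ℕ) ≠ n - 1 := fun h =>
      hk (Fin.val_injective (h.trans hi1v.symm) ▸ hi1I)
    apply le_antisymm _ (lower I Sn)
    intro g hg
    obtain ⟨hgI, hgSn⟩ := Subgroup.mem_inf.mp hg
    obtain ⟨g1, hg1, g2, hg2, rfl⟩ := split I k hk g hgI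
    have hI2S0 : {i ∈ I | (k : ℕ) < (i : ℕ)} ⊆ S0 := fun i hi => by
      have h2 := hi.2
      simp only [hS0def, Set.mem_setOf_eq]
      omega
    have hI1Sn : {i ∈ I | (i : ℕ) < (k : ℕ)} ⊆ Sn := fun i hi => by
      have h2 := hi.2
      have h3 := k.isLt
      simp only [hSndef, Set.mem_setOf_eq]
      omega
    have hg1Sn : g1 ∈ Subgroup.closure (r '' Sn) := mono hI1Sn hg1
    have hg2Sn : g2 ∈ Subgroup.closure (r '' Sn) := by
      have e : g2 = g1⁻¹ * (g1 * g2) := by group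
      rw [e]
      exact mul_mem (inv_mem hg1Sn) hgSn
    have hg2' : g2 ∈ Subgroup.closure (r '' ({i ∈ I | (k : ℕ) < (i : ℕ)} ∩ Sn)) := by
      rw [← claimL' _ hI2S0]
      exact Subgroup.mem_inf.mpr ⟨hg2, hg2Sn⟩
    have sub1 : {i ∈ I | (i : ℕ) < (k : ℕ)} ⊆ I ∩ Sn := fun i hi => ⟨hi.1, hI1Sn hi⟩
    have sub2 : {i ∈ I | (k : ℕ) < (i : ℕ)} ∩ Sn ⊆ I ∩ Sn := fun i hi => ⟨hi.1.1, hi.2⟩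
    exact mul_mem (mono sub1 hg1) (mono sub2 hg2')
  -- intersections where one factor avoids an end node
  have step2R : ∀ I J : Set (Fin n), J ⊆ S0 →
      Subgroup.closure (r '' I) ⊓ Subgroup.closure (r '' J) =
      Subgroup.closure (r '' (I ∩ J)) := by
    intro I J hJ
    have e1 : Subgroup.closure (r '' S0) ⊓ Subgroup.closure (r '' J) =
        Subgroup.closure (r '' J) := inf_eq_right.mpr (mono hJ)
    have e3 : I ∩ S0 ∩ J = I ∩ J := by
      ext i
      exact ⟨fun ⟨⟨h1, _⟩, h3⟩ => ⟨h1, h3⟩, fun ⟨h1, h3⟩ => ⟨⟨h1, hJ h3⟩, h3⟩⟩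
    calc Subgroup.closure (r '' I) ⊓ Subgroup.closure (r '' J)
        = Subgroup.closure (r '' I) ⊓
            (Subgroup.closure (r '' S0) ⊓ Subgroup.closure (r '' J)) := by rw [e1]
      _ = Subgroup.closure (r '' I) ⊓ Subgroup.closure (r '' S0) ⊓
            Subgroup.closure (r '' J) := by rw [inf_assoc]
      _ = Subgroup.closure (r '' (I ∩ S0)) ⊓ Subgroup.closure (r '' J) := by
          rw [claimA I]
      _ = Subgroup.closure (r '' (I ∩ S0 ∩ J)) :=
          h0 (I ∩ S0) J Set.inter_subset_right hJ
      _ = _ := by rw [e3]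
  have step2Rn : ∀ I J : Set (Fin n), J ⊆ Sn →
      Subgroup.closure (r '' I) ⊓ Subgroup.closure (r '' J) =
      Subgroup.closure (r '' (I ∩ J)) := by
    intro I J hJ
    have e1 : Subgroup.closure (r '' Sn) ⊓ Subgroup.closure (r '' J) =
        Subgroup.closure (r '' J) := inf_eq_right.mpr (mono hJ)
    have e3 : I ∩ Sn ∩ J = I ∩ J := by
      ext i
      exact ⟨fun ⟨⟨h1, _⟩, h3⟩ => ⟨h1, h3⟩, fun ⟨h1, h3⟩ => ⟨⟨h1, hJ h3⟩, h3⟩⟩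
    calc Subgroup.closure (r '' I) ⊓ Subgroup.closure (r '' J)
        = Subgroup.closure (r '' I) ⊓
            (Subgroup.closure (r '' Sn) ⊓ Subgroup.closure (r '' J)) := by rw [e1]
      _ = Subgroup.closure (r '' I) ⊓ Subgroup.closure (r '' Sn) ⊓
            Subgroup.closure (r '' J) := by rw [inf_assoc]
      _ = Subgroup.closure (r '' (I ∩ Sn)) ⊓ Subgroup.closure (r '' J) := by
          rw [claimA' I]
      _ = Subgroup.closure (r '' (I ∩ Sn ∩ J)) :=
          hn1 (I ∩ Sn) J Set.inter_subset_right hJ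
      _ = _ := by rw [e3]
  have step2L : ∀ I J : Set (Fin n), I ⊆ S0 →
      Subgroup.closure (r '' I) ⊓ Subgroup.closure (r '' J) =
      Subgroup.closure (r '' (I ∩ J)) := by
    intro I J hI
    rw [inf_comm, step2R J I hI, Set.inter_comm]
  have step2Ln : ∀ I J : Set (Fin n), I ⊆ Sn →
      Subgroup.closure (r '' I) ⊓ Subgroup.closure (r '' J) =
      Subgroup.closure (r '' (I ∩ J)) := by
    intro I J hI
    rw [inf_comm, step2Rn J I hI, Set.inter_comm]
  -- the remaining hard case
  have core : ∀ (I J : Set (Fin n)) (k l : Fin n), k ∉ I → l ∉ J →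
      (k : ℕ) ≠ 0 → (k : ℕ) ≠ n - 1 → (l : ℕ) ≠ 0 → (l : ℕ) ≠ n - 1 →
      (k : ℕ) ≤ (l : ℕ) →
      Subgroup.closure (r '' I) ⊓ Subgroup.closure (r '' J) ≤
        Subgroup.closure (r '' (I ∩ J)) := by
    intro I J k l hkI hlJ hk0 hkn hl0 hln hkl g hg
    obtain ⟨hgI, hgJ⟩ := Subgroup.mem_inf.mp hg
    obtain ⟨g1, hg1, g2, hg2, hgeq⟩ := split I k hkI g hgI
    obtain ⟨h1, hh1, h2, hh2, hheq⟩ := split J l hlJ g hgJ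
    have hgh : g1 * g2 = h1 * h2 := by rw [← hgeq, ← hheq]
    have hxeq : h1⁻¹ * g1 = h2 * g2⁻¹ := by
      have e : g1 = h1 * h2 * g2⁻¹ := by rw [← hgh]; group
      rw [e]; group
    have hxA : h1⁻¹ * g1 ∈ Subgroup.closure
        (r '' ({i ∈ I | (i : ℕ) < (k : ℕ)} ∪ {i ∈ J | (i : ℕ) < (l : ℕ)})) :=
      mul_mem (mono Set.subset_union_right (inv_mem hh1))
        (mono Set.subset_union_left hg1)
    have hxB : h1⁻¹ * g1 ∈ Subgroup.closure
        (r '' ({i ∈ I | (k : ℕ) < (i : ℕ)} ∪ {i ∈ J | (l : ℕ) < (i : ℕ)})) := by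
      rw [hxeq]
      exact mul_mem (mono Set.subset_union_right hh2)
        (mono Set.subset_union_left (inv_mem hg2))
    have hBS0 : ({i ∈ I | (k : ℕ) < (i : ℕ)} ∪ {i ∈ J | (l : ℕ) < (i : ℕ)}) ⊆ S0 := by
      rintro i (hi | hi) <;>
        · have h2' := hi.2
          simp only [hS0def, Set.mem_setOf_eq]
          omega
    have hxC : h1⁻¹ * g1 ∈ Subgroup.closure
        (r '' (({i ∈ I | (i : ℕ) < (k : ℕ)} ∪ {i ∈ J | (i : ℕ) < (l : ℕ)}) ∩
          ({i ∈ I | (k : ℕ) < (i : ℕ)} ∪ {i ∈ J | (l : ℕ) < (i : ℕ)}))) := by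
      rw [← step2R _ _ hBS0]
      exact Subgroup.mem_inf.mpr ⟨hxA, hxB⟩
    have hsubx : (({i ∈ I | (i : ℕ) < (k : ℕ)} ∪ {i ∈ J | (i : ℕ) < (l : ℕ)}) ∩
          ({i ∈ I | (k : ℕ) < (i : ℕ)} ∪ {i ∈ J | (l : ℕ) < (i : ℕ)})) ⊆
        {i ∈ I | (k : ℕ) < (i : ℕ)} ∩ {i ∈ J | (i : ℕ) < (l : ℕ)} := by
      rintro i ⟨hA | hA, hB | hB⟩
      · exact absurd hA.2 (by have := hB.2; omega)
      · exact absurd hA.2 (by have := hB.2; omega)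
      · exact ⟨hB, hA⟩
      · exact absurd hA.2 (by have := hB.2; omega)
    have hx : h1⁻¹ * g1 ∈ Subgroup.closure
        (r '' ({i ∈ I | (k : ℕ) < (i : ℕ)} ∩ {i ∈ J | (i : ℕ) < (l : ℕ)})) :=
      mono hsubx hxC
    -- h1 ∈ c (I ∩ J1)
    have hh1I : h1 ∈ Subgroup.closure (r '' I) := by
      have e : h1 = g1 * (h1⁻¹ * g1)⁻¹ := by group
      rw [e]
      exact mul_mem (mono (fun i hi => hi.1) hg1)
        (inv_mem (mono (fun i hi => hi.1.1) hx))
    have hJ1Sn : {i ∈ J | (i : ℕ) < (l : ℕ)} ⊆ Sn := fun i hi => by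
      have h2' := hi.2
      have h3 := l.isLt
      simp only [hSndef, Set.mem_setOf_eq]
      omega
    have hh1' : h1 ∈ Subgroup.closure (r '' (I ∩ {i ∈ J | (i : ℕ) < (l : ℕ)})) := by
      rw [← step2Rn I _ hJ1Sn]
      exact Subgroup.mem_inf.mpr ⟨hh1I, hh1⟩
    -- g2 ∈ c (I2 ∩ J)
    have hg2J : g2 ∈ Subgroup.closure (r '' J) := by
      have e : g2 = (h1⁻¹ * g1)⁻¹ * h2 := by rw [hxeq]; group
      rw [e]
      exact mul_mem (inv_mem (mono (fun i hi => hi.2.1) hx))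
        (mono (fun i hi => hi.1) hh2)
    have hI2S0 : {i ∈ I | (k : ℕ) < (i : ℕ)} ⊆ S0 := fun i hi => by
      have h2' := hi.2
      simp only [hS0def, Set.mem_setOf_eq]
      omega
    have hg2' : g2 ∈ Subgroup.closure (r '' ({i ∈ I | (k : ℕ) < (i : ℕ)} ∩ J)) := by
      rw [← step2L _ J hI2S0]
      exact Subgroup.mem_inf.mpr ⟨hg2, hg2J⟩
    have hfin : g = h1 * (h1⁻¹ * g1) * g2 := by rw [hgeq]; group
    rw [hfin]
    refine mul_mem (mul_mem (mono ?_ hh1') (mono ?_ hx)) (mono ?_ hg2')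
    · exact fun i hi => ⟨hi.1, hi.2.1⟩
    · exact fun i hi => ⟨hi.1.1, hi.2.1⟩
    · exact fun i hi => ⟨hi.1.1, hi.2⟩
  -- final assembly
  intro I J _ _
  by_cases hJ0 : J ⊆ S0
  · exact step2R I J hJ0
  by_cases hJn : J ⊆ Sn
  · exact step2Rn I J hJn
  by_cases hI0 : I ⊆ S0
  · exact step2L I J hI0
  by_cases hIn : I ⊆ Sn
  · exact step2Ln I J hIn
  by_cases hIu : I = Set.univ
  · subst hIu
    rw [Set.univ_inter]
    exact inf_eq_right.mpr (mono (Set.subset_univ _))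
  by_cases hJu : J = Set.univ
  · subst hJu
    rw [Set.inter_univ]
    exact inf_eq_left.mpr (mono (Set.subset_univ _))
  obtain ⟨i0, hi0I, hi0⟩ := Set.not_subset.mp hI0
  obtain ⟨i1, hi1I, hi1⟩ := Set.not_subset.mp hIn
  obtain ⟨j0, hj0J, hj0⟩ := Set.not_subset.mp hJ0
  obtain ⟨j1, hj1J, hj1⟩ := Set.not_subset.mp hJn
  have hi0v : (i0 : ℕ) = 0 := not_not.mp hi0
  have hi1v : (i1 : ℕ) = n - 1 := not_not.mp hi1
  have hj0v : (j0 : ℕ) = 0 := not_not.mp hj0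
  have hj1v : (j1 : ℕ) = n - 1 := not_not.mp hj1
  obtain ⟨k, hkI⟩ : ∃ k : Fin n, k ∉ I := by
    by_contra h
    push_neg at h
    exact hIu (Set.eq_univ_of_forall h)
  obtain ⟨l, hlJ⟩ : ∃ l : Fin n, l ∉ J := by
    by_contra h
    push_neg at h
    exact hJu (Set.eq_univ_of_forall h)
  have hk0 : (k : ℕ) ≠ 0 := fun h =>
    hkI (Fin.val_injective (h.trans hi0v.symm) ▸ hi0I)
  have hkn : (k : ℕ) ≠ n - 1 := fun h =>
    hkI (Fin.val_injective (h.trans hi1v.symm) ▸ hi1I)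
  have hl0 : (l : ℕ) ≠ 0 := fun h =>
    hlJ (Fin.val_injective (h.trans hj0v.symm) ▸ hj0J)
  have hln : (l : ℕ) ≠ n - 1 := fun h =>
    hlJ (Fin.val_injective (h.trans hj1v.symm) ▸ hj1J)
  apply le_antisymm _ (lower I J)
  rcases le_total (k : ℕ) (l : ℕ) with hkl | hkl
  · exact core I J k l hkI hlJ hk0 hkn hl0 hln hkl
  · intro g hg
    obtain ⟨hgI, hgJ⟩ := Subgroup.mem_inf.mp hg
    have := core J I l k hlJ hkI hl0 hln hk0 hkn hkl
      (Subgroup.mem_inf.mpr ⟨hgJ, hgI⟩)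
    exact mono (show J ∩ I ⊆ I ∩ J from fun i hi => ⟨hi.2, hi.1⟩) this

end Statement1
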